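/- Let U ⊆ ℂ be open and connected and let g : U → ℂ be holomorphic and nowhere zero, satisfying g''' − 3·g'·g''/g + (3/2)·(g')³/g² = 0 on U. Then there exist constants α, β ∈ ℂ such that (g')² = β·g³ + α·g on U. (Equivalently, the function h_S = (i/2)(g')²/g³ has the form b − c/g² for constants b, c ∈ ℂ; this is the situation in which the infinitesimal Shiffman deformation ġ_S vanishes and the Shiffman function is linear, Corollary 6.14(3) of the paper.) -/

import Mathlib

open Complex

set_option maxHeartbeats 1000000

/-- A function with vanishing derivative on a ball is constant there. -/
lemma const_on_ball_aux {f : ℂ → ℂ} {c : ℂ} {r : ℝ}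
    (h : ∀ z ∈ Metric.ball c r, HasDerivAt f 0 z) :
    ∀ z ∈ Metric.ball c r, f z = f c := by
  intro z hz
  by_cases hr : 0 < r
  · refine (convex_ball c r).is_const_of_fderivWithin_eq_zero
      (fun w hw => (h w hw).differentiableAt.differentiableWithinAt) ?_ hz
      (Metric.mem_ball_self hr)
    intro w hw
    rw [fderivWithin_of_isOpen Metric.isOpen_ball hw, (h w hw).hasFDerivAt.fderiv]
    ext
    simp
  · exact absurd hz (by simp [Metric.ball_eq_empty.2 (le_of_not_gt hr)])

/-- If the Shiffman infinitesimal deformation of a nowhere-zero holomorphic `g`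
vanishes, i.e. `g''' − 3g'g''/g + (3/2)(g')³/g² = 0` on a connected open set, then
`(g')² = β g³ + α g` for some constants `α, β ∈ ℂ`. -/
theorem vanishing_shiffman_deformation_gives_elliptic_ode
    (U : Set ℂ) (hU : IsOpen U) (hconn : IsConnected U)
    (g : ℂ → ℂ) (hg : DifferentiableOn ℂ g U) (hg0 : ∀ z ∈ U, g z ≠ 0)
    (hS : ∀ z ∈ U,
      deriv (deriv (deriv g)) z - 3 * deriv g z * deriv (deriv g) z / g z
        + (3 / 2) * (deriv g z) ^ 3 / (g z) ^ 2 = 0) :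
    ∃ α β : ℂ, ∀ z ∈ U, (deriv g z) ^ 2 = β * (g z) ^ 3 + α * g z := by
  have hA : AnalyticOnNhd ℂ g U := hg.analyticOnNhd hU
  set g1 := deriv g with hg1def
  set g2 := deriv g1 with hg2def
  set g3 := deriv g2 with hg3def
  have hA1 : AnalyticOnNhd ℂ g1 U := hA.deriv
  have hA2 : AnalyticOnNhd ℂ g2 U := hA1.deriv
  have hd0 : ∀ z ∈ U, HasDerivAt g (g1 z) z :=
    fun z hz => (hA z hz).differentiableAt.hasDerivAt
  have hd1 : ∀ z ∈ U, HasDerivAt g1 (g2 z) z :=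
    fun z hz => (hA1 z hz).differentiableAt.hasDerivAt
  have hd2 : ∀ z ∈ U, HasDerivAt g2 (g3 z) z :=
    fun z hz => (hA2 z hz).differentiableAt.hasDerivAt
  -- the ODE, with denominators cleared
  have hpoly : ∀ z ∈ U, 2 * (g z) ^ 2 * g3 z = 6 * g1 z * g2 z * g z - 3 * (g1 z) ^ 3 := by
    intro z hz
    have h := hS z hz
    field_simp [hg0 z hz] at h
    have h' : g z * (2 * (g z) ^ 2 * g3 z) = g z * (6 * g1 z * g2 z * g z - 3 * (g1 z) ^ 3) := by
      linear_combination g z * h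
    exact mul_left_cancel₀ (hg0 z hz) h'
  by_cases hcase : ∀ z ∈ U, g1 z = 0
  · exact ⟨0, 0, fun z hz => by rw [hcase z hz]; ring⟩
  push_neg at hcase
  obtain ⟨z₀, hz₀U, hz₀⟩ := hcase
  set β : ℂ := (2 * g z₀ * g1 z₀ * g2 z₀ - (g1 z₀) ^ 3) / (2 * (g z₀) ^ 3 * g1 z₀) with hβ
  set H : ℂ → ℂ := fun z => 2 * g z * g1 z * g2 z - g1 z ^ 3 - β * (2 * g z ^ 3 * g1 z)
    with hH
  have hden : 2 * (g z₀) ^ 3 * g1 z₀ ≠ 0 :=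
    mul_ne_zero (mul_ne_zero two_ne_zero (pow_ne_zero _ (hg0 z₀ hz₀U))) hz₀
  have hHz₀ : H z₀ = 0 := by
    rw [hH]
    simp only
    rw [hβ, div_mul_cancel₀ _ hden]
    ring
  -- derivative of H
  have hHd : ∀ z ∈ U, HasDerivAt H
      ((2 * g1 z * g1 z + 2 * g z * g2 z) * g2 z + 2 * g z * g1 z * g3 z
        - 3 * g1 z ^ 2 * g2 z
        - β * (2 * (3 * g z ^ 2 * g1 z) * g1 z + 2 * g z ^ 3 * g2 z)) z := by
    intro z hz
    exact ((((((hd0 z hz).const_mul 2).mul (hd1 z hz)).mul (hd2 z hz)).sub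
      ((hd1 z hz).pow 3)).sub
      (((((hd0 z hz).pow 3).const_mul 2).mul (hd1 z hz)).const_mul β))
  -- the key linear ODE satisfied by H
  have hHkey : ∀ z ∈ U,
      g z * g1 z * ((2 * g1 z * g1 z + 2 * g z * g2 z) * g2 z + 2 * g z * g1 z * g3 z
        - 3 * g1 z ^ 2 * g2 z
        - β * (2 * (3 * g z ^ 2 * g1 z) * g1 z + 2 * g z ^ 3 * g2 z))
      = H z * (3 * g1 z ^ 2 + g z * g2 z) := by
    intro z hz
    rw [hH]
    simp only
    linear_combination g1 z ^ 2 * hpoly z hz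
  -- an open neighborhood of z₀ where g³·g1 ≠ 0
  have hWopen : IsOpen {z | z ∈ U ∧ (g z) ^ 3 * g1 z ≠ 0} := by
    rw [isOpen_iff_mem_nhds]
    rintro z ⟨hzU, hzφ⟩
    have hc : ContinuousAt (fun w => (g w) ^ 3 * g1 w) z :=
      ((hA z hzU).continuousAt.pow 3).mul (hA1 z hzU).continuousAt
    exact Filter.inter_mem (hU.mem_nhds hzU)
      (hc.preimage_mem_nhds (compl_singleton_mem_nhds hzφ))
  have hz₀W : z₀ ∈ {z | z ∈ U ∧ (g z) ^ 3 * g1 z ≠ 0} :=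
    ⟨hz₀U, mul_ne_zero (pow_ne_zero _ (hg0 z₀ hz₀U)) hz₀⟩
  obtain ⟨r, hr0, hball⟩ := Metric.isOpen_iff.1 hWopen z₀ hz₀W
  -- H/(g³ g1) has zero derivative on the ball
  have hψd : ∀ z ∈ Metric.ball z₀ r,
      HasDerivAt (fun w => H w / ((g w) ^ 3 * g1 w)) 0 z := by
    intro z hz
    obtain ⟨hzU, hzφ⟩ := hball hz
    have hφd : HasDerivAt (fun w => (g w) ^ 3 * g1 w)
        (3 * g z ^ 2 * g1 z * g1 z + g z ^ 3 * g2 z) z :=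
      ((hd0 z hzU).pow 3).mul (hd1 z hzU)
    have h := (hHd z hzU).div hφd hzφ
    have hzero : (((2 * g1 z * g1 z + 2 * g z * g2 z) * g2 z + 2 * g z * g1 z * g3 z
        - 3 * g1 z ^ 2 * g2 z
        - β * (2 * (3 * g z ^ 2 * g1 z) * g1 z + 2 * g z ^ 3 * g2 z)) * (g z ^ 3 * g1 z)
        - H z * (3 * g z ^ 2 * g1 z * g1 z + g z ^ 3 * g2 z)) / (g z ^ 3 * g1 z) ^ 2
        = 0 := by
      apply div_eq_zero_iff.2
      left
      linear_combination g z ^ 2 * hHkey z hzU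
    rwa [hzero] at h
  -- hence H vanishes on the ball
  have hHball : ∀ z ∈ Metric.ball z₀ r, H z = 0 := by
    intro z hz
    have h := const_on_ball_aux hψd z hz
    have hz₀b : H z₀ / ((g z₀) ^ 3 * g1 z₀) = 0 := by rw [hHz₀, zero_div]
    rw [hz₀b] at h
    obtain ⟨hzU, hzφ⟩ := hball hz
    rcases div_eq_zero_iff.1 h with h' | h'
    · exact h'
    · exact absurd h' hzφ
  -- identity theorem: H vanishes on all of U
  have hHanal : AnalyticOnNhd ℂ H U := by
    exact (((analyticOnNhd_const.mul hA).mul hA1).mul hA2).sub (hA1.pow 3) |>.sub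
      (analyticOnNhd_const.mul ((analyticOnNhd_const.mul (hA.pow 3)).mul hA1))
  have hHeq0 : Set.EqOn H 0 U :=
    hHanal.eqOn_zero_of_preconnected_of_eventuallyEq_zero hconn.isPreconnected hz₀U
      (Filter.eventuallyEq_of_mem (Metric.ball_mem_nhds z₀ hr0) hHball)
  -- now ((g1)² − β g³)/g has zero derivative on U
  set R : ℂ → ℂ := fun z => (g1 z ^ 2 - β * g z ^ 3) / g z with hR
  have hRd : ∀ z ∈ U, HasDerivAt R 0 z := by
    intro z hz
    have h0 := (((hd1 z hz).pow 2).sub (((hd0 z hz).pow 3).const_mul β)).div (hd0 z hz)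
      (hg0 z hz)
    norm_num at h0
    have h : HasDerivAt R (((2 * g1 z * g2 z - β * (3 * g z ^ 2 * g1 z)) * g z
        - (g1 z ^ 2 - β * g z ^ 3) * g1 z) / g z ^ 2) z := h0
    have hzero : ((2 * g1 z * g2 z - β * (3 * g z ^ 2 * g1 z)) * g z
        - (g1 z ^ 2 - β * g z ^ 3) * g1 z) / g z ^ 2 = 0 := by
      apply div_eq_zero_iff.2
      left
      have hz0 : H z = 0 := hHeq0 hz
      rw [hH] at hz0
      simp only at hz0
      linear_combination hz0
    rwa [hzero] at h
  set α : ℂ := R z₀ with hα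
  have hRanal : AnalyticOnNhd ℂ R U :=
    ((hA1.pow 2).sub (analyticOnNhd_const.mul (hA.pow 3))).div hA hg0
  have hRball : ∀ z ∈ Metric.ball z₀ r, R z = α := by
    intro z hz
    exact const_on_ball_aux (fun w hw => hRd w (hball hw).1) z hz
  have hReq : Set.EqOn R (fun _ => α) U :=
    hRanal.eqOn_of_preconnected_of_eventuallyEq analyticOnNhd_const hconn.isPreconnected
      hz₀U (Filter.eventuallyEq_of_mem (Metric.ball_mem_nhds z₀ hr0) hRball)
  refine ⟨α, β, fun z hz => ?_⟩
  have h := hReq hz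
  rw [hR] at h
  simp only at h
  have h' := (div_eq_iff (hg0 z hz)).1 h
  linear_combination h'
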